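/- Let α > 0, let ψ : Σ_A⁺ → ℝ be α-Hölder, and let λ > 0, h strictly positive α-Hölder and ν a Borel probability measure satisfy L_ψ h = λ h, ∫ L_ψ g dν = λ ∫ g dν for all continuous g, and ∫ h dν = 1. Then the Borel measure μ defined by dμ = h dν is a σ-invariant probability measure on Σ_A⁺ (i.e. μ(Σ_A⁺) = 1 and μ(σ^{−1}B) = μ(B) for every Borel set B). -/

import Mathlib

open scoped BigOperators Classical
open Filter Topology MeasureTheory

namespace SpectralGibbs

/-- The one-sided shift space `Σ_A⁺` determined by a `k × k` zero-one matrix `A`. -/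
abbrev ShiftSpace (k : ℕ) (A : Matrix (Fin k) (Fin k) ℕ) : Type :=
  {x : ℕ → Fin k // ∀ m : ℕ, A (x m) (x (m + 1)) = 1}

/-- `A` has entries in `{0,1}`. -/
def ZeroOne (k : ℕ) (A : Matrix (Fin k) (Fin k) ℕ) : Prop :=
  ∀ i j : Fin k, A i j = 0 ∨ A i j = 1

/-- `A` is aperiodic: some power of `A` has all entries positive. -/
def Aperiodic (k : ℕ) (A : Matrix (Fin k) (Fin k) ℕ) : Prop :=
  ∃ n : ℕ, 1 ≤ n ∧ ∀ i j : Fin k, 0 < (A ^ n) i j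

/-- The shift map `σ`. -/
def shift (k : ℕ) (A : Matrix (Fin k) (Fin k) ℕ) :
    ShiftSpace k A → ShiftSpace k A :=
  fun x => ⟨fun m => x.1 (m + 1), fun m => x.2 (m + 1)⟩

/-- The metric `d(x,y) = 2^{-min{m : x_m ≠ y_m}}` for `x ≠ y` (and `0` for `x = y`). -/
noncomputable def dist' (k : ℕ) (A : Matrix (Fin k) (Fin k) ℕ)
    (x y : ShiftSpace k A) : ℝ :=
  if x = y then 0 else (2 : ℝ)⁻¹ ^ sInf {m : ℕ | x.1 m ≠ y.1 m}

/-- `f` is `α`-Hölder: `sup_{x ≠ y} ‖f x - f y‖ / d(x,y)^α < ∞`. -/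
def IsHolder {E : Type*} [NormedAddCommGroup E] (k : ℕ) (A : Matrix (Fin k) (Fin k) ℕ)
    (α : ℝ) (f : ShiftSpace k A → E) : Prop :=
  ∃ C : ℝ, ∀ x y : ShiftSpace k A, ‖f x - f y‖ ≤ C * dist' k A x y ^ α

/-- The sequence `ix` obtained by prepending the symbol `i` to a sequence `x`. -/
def consSeq (k : ℕ) (i : Fin k) (x : ℕ → Fin k) : ℕ → Fin k
  | 0 => i
  | m + 1 => x m

/-- The point `ix ∈ Σ_A⁺`, defined whenever `A(i, x_0) = 1`. -/
def cons (k : ℕ) (A : Matrix (Fin k) (Fin k) ℕ) (i : Fin k) (x : ShiftSpace k A)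
    (h : A i (x.1 0) = 1) : ShiftSpace k A :=
  ⟨consSeq k i x.1, by
    intro m
    match m with
    | 0 => exact h
    | m + 1 => exact x.2 m⟩

/-- The transfer operator `(L_ψ g)(x) = Σ_{σ y = x} e^{ψ(y)} g(y)`. -/
noncomputable def transfer {E : Type*} [AddCommMonoid E] [SMul ℝ E]
    (k : ℕ) (A : Matrix (Fin k) (Fin k) ℕ)
    (ψ : ShiftSpace k A → ℝ) (g : ShiftSpace k A → E) (x : ShiftSpace k A) : E :=
  ∑ i : Fin k,
    if h : A i (x.1 0) = 1 then Real.exp (ψ (cons k A i x h)) • g (cons k A i x h) else 0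

/-- `-φ` is normalized: `Σ_{σ y = x} e^{-φ(y)} = 1` for all `x`. -/
def NormalizedNeg (k : ℕ) (A : Matrix (Fin k) (Fin k) ℕ) (φ : ShiftSpace k A → ℝ) : Prop :=
  ∀ x : ShiftSpace k A, transfer k A (fun y => -φ y) (fun _ => (1 : ℝ)) x = 1

/-- Birkhoff sum `φ^n = φ + φ∘σ + ⋯ + φ∘σ^{n-1}`. -/
noncomputable def birk (k : ℕ) (A : Matrix (Fin k) (Fin k) ℕ)
    (φ : ShiftSpace k A → ℝ) (n : ℕ) (x : ShiftSpace k A) : ℝ :=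
  ∑ i ∈ Finset.range n, φ ((shift k A)^[i] x)

/-- A word `w = (w_1, …, w_{n+1})` (of length `n+1 ≥ 1`) is allowed if consecutive
letters are compatible with `A`. -/
def Allowed (k : ℕ) (A : Matrix (Fin k) (Fin k) ℕ) {n : ℕ} (w : Fin (n + 1) → Fin k) : Prop :=
  ∀ i : Fin n, A (w i.castSucc) (w i.succ) = 1

/-- `W*`: the set of all allowed finite words (of length `≥ 1`). -/
def Words (k : ℕ) (A : Matrix (Fin k) (Fin k) ℕ) : Type :=
  Σ n : ℕ, {w : Fin (n + 1) → Fin k // Allowed k A w}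

/-- The length `|w|` of a word. -/
def wordLen (k : ℕ) (A : Matrix (Fin k) (Fin k) ℕ) (w : Words k A) : ℕ := w.1 + 1

/-- The last letter `t(w)` of a word. -/
def wordLast (k : ℕ) (A : Matrix (Fin k) (Fin k) ℕ) (w : Words k A) : Fin k :=
  w.2.1 (Fin.last w.1)

/-- The concatenated sequence `w x`. -/
def wordSeq (k : ℕ) {n : ℕ} (w : Fin (n + 1) → Fin k) (x : ℕ → Fin k) : ℕ → Fin k :=
  fun m => if h : m < n + 1 then w ⟨m, h⟩ else x (m - (n + 1))

theorem glue_mem (k : ℕ) (A : Matrix (Fin k) (Fin k) ℕ) {n : ℕ}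
    (w : Fin (n + 1) → Fin k) (hw : Allowed k A w) (x : ShiftSpace k A)
    (hx : A (w (Fin.last n)) (x.1 0) = 1) :
    ∀ m : ℕ, A (wordSeq k w x.1 m) (wordSeq k w x.1 (m + 1)) = 1 := by
  intro m
  unfold wordSeq
  rcases lt_trichotomy (m + 1) (n + 1) with h | h | h
  · have hm : m < n + 1 := by omega
    rw [dif_pos hm, dif_pos h]
    exact hw ⟨m, by omega⟩
  · have hm : m < n + 1 := by omega
    rw [dif_pos hm, dif_neg (by omega)]
    have h0 : m + 1 - (n + 1) = 0 := by omega
    rw [h0]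
    have hl : (⟨m, hm⟩ : Fin (n + 1)) = Fin.last n := by
      apply Fin.ext
      simp only [Fin.last]
      omega
    rw [hl]
    exact hx
  · rw [dif_neg (by omega), dif_neg (by omega)]
    have h1 : m + 1 - (n + 1) = (m - (n + 1)) + 1 := by omega
    rw [h1]
    exact x.2 (m - (n + 1))

/-- The point `w x ∈ Σ_A⁺`, for an allowed word `w` and `x` with `A(t(w), x_0) = 1`. -/
def glue (k : ℕ) (A : Matrix (Fin k) (Fin k) ℕ) {n : ℕ}
    (w : Fin (n + 1) → Fin k) (hw : Allowed k A w) (x : ShiftSpace k A)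
    (hx : A (w (Fin.last n)) (x.1 0) = 1) : ShiftSpace k A :=
  ⟨wordSeq k w x.1, glue_mem k A w hw x hx⟩

/-- Given a family of points `p j` with `A(j, (p j)_0) = 1`, the point `w p^{t(w)}`. -/
def wordPt (k : ℕ) (A : Matrix (Fin k) (Fin k) ℕ) {n : ℕ}
    (w : Fin (n + 1) → Fin k) (hw : Allowed k A w)
    (p : Fin k → ShiftSpace k A) (hp : ∀ j : Fin k, A j ((p j).1 0) = 1) : ShiftSpace k A :=
  glue k A w hw (p (w (Fin.last n))) (hp _)

/-- The point `w p^{t(w)}` for `w ∈ W*`. -/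
def wpt (k : ℕ) (A : Matrix (Fin k) (Fin k) ℕ)
    (p : Fin k → ShiftSpace k A) (hp : ∀ j : Fin k, A j ((p j).1 0) = 1)
    (w : Words k A) : ShiftSpace k A :=
  wordPt k A w.2.1 w.2.2 p hp

/-- The indicator function `χ_j` of the cylinder `[j] = {x : x_0 = j}`. -/
noncomputable def cylInd (k : ℕ) (A : Matrix (Fin k) (Fin k) ℕ) (j : Fin k) :
    ShiftSpace k A → ℝ :=
  fun x => if x.1 0 = j then 1 else 0


/-- The eigenvalue family of `π(f)|D_φ|⁻¹`, indexed by `W* × {1,2}`. -/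
noncomputable def eigval (k : ℕ) (A : Matrix (Fin k) (Fin k) ℕ)
    (xp : Fin k → ShiftSpace k A) (hxp : ∀ j : Fin k, A j ((xp j).1 0) = 1)
    (yp : Fin k → ShiftSpace k A) (hyp : ∀ j : Fin k, A j ((yp j).1 0) = 1)
    (zp : Fin k → ShiftSpace k A) (hzp : ∀ j : Fin k, A j ((zp j).1 0) = 1)
    (φ f : ShiftSpace k A → ℝ) : Words k A × Fin 2 → ℝ :=
  fun p =>
    (if p.2 = 0 then f (wpt k A yp hyp p.1) else f (wpt k A zp hzp p.1)) *
      Real.exp (-(birk k A φ (wordLen k A p.1) (wpt k A xp hxp p.1)))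

-- auxiliary lemmas

instance instPMS (k : ℕ) (A : Matrix (Fin k) (Fin k) ℕ) :
    TopologicalSpace.PseudoMetrizableSpace (ShiftSpace k A) :=
  TopologicalSpace.PseudoMetrizableSpace.subtype {x : ℕ → Fin k | ∀ m : ℕ, A (x m) (x (m + 1)) = 1}

instance instBorel (k : ℕ) (A : Matrix (Fin k) (Fin k) ℕ) :
    BorelSpace (ShiftSpace k A) :=
  Subtype.borelSpace {x : ℕ → Fin k | ∀ m : ℕ, A (x m) (x (m + 1)) = 1}

lemma dist'_nonneg (k : ℕ) (A : Matrix (Fin k) (Fin k) ℕ) (x y : ShiftSpace k A) :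
    0 ≤ dist' k A x y := by
  unfold dist'; split
  · exact le_rfl
  · positivity

lemma dist'_le_one (k : ℕ) (A : Matrix (Fin k) (Fin k) ℕ) (x y : ShiftSpace k A) :
    dist' k A x y ≤ 1 := by
  unfold dist'; split
  · norm_num
  · exact pow_le_one₀ (by norm_num) (by norm_num)

lemma continuous_shift (k : ℕ) (A : Matrix (Fin k) (Fin k) ℕ) :
    Continuous (shift k A) := by
  apply Continuous.subtype_mk
  exact continuous_pi fun m => (continuous_apply (m + 1)).comp continuous_subtype_val

lemma continuous_of_isHolder (k : ℕ) (A : Matrix (Fin k) (Fin k) ℕ) {α : ℝ} (hα : 0 < α)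
    {f : ShiftSpace k A → ℝ} (hf : IsHolder k A α f) : Continuous f := by
  obtain ⟨C, hC⟩ := hf
  set C' := max C 1 with hC'def
  have hC'pos : 0 < C' := lt_of_lt_of_le one_pos (le_max_right _ _)
  have hC2 : ∀ x y, ‖f x - f y‖ ≤ C' * dist' k A x y ^ α := fun x y =>
    (hC x y).trans (mul_le_mul_of_nonneg_right (le_max_left _ _)
      (Real.rpow_nonneg (dist'_nonneg k A x y) α))
  rw [continuous_iff_continuousAt]
  intro x
  rw [ContinuousAt, Metric.tendsto_nhds]
  intro ε hε
  set r : ℝ := (2 : ℝ)⁻¹ ^ α with hrdef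
  have hr0 : 0 ≤ r := Real.rpow_nonneg (by norm_num) _
  have hr1 : r < 1 := Real.rpow_lt_one (by norm_num) (by norm_num) hα
  obtain ⟨N, hN⟩ := exists_pow_lt_of_lt_one (div_pos hε hC'pos) hr1
  have hU : {y : ShiftSpace k A | ∀ m < N, y.1 m = x.1 m} ∈ 𝓝 x := by
    have hopen : IsOpen {g : ℕ → Fin k | ∀ m < N, g m = x.1 m} := by
      have heq : {g : ℕ → Fin k | ∀ m < N, g m = x.1 m}
          = ⋂ m ∈ Set.Iio N, (fun g : ℕ → Fin k => g m) ⁻¹' {x.1 m} := by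
        ext g; simp
      rw [heq]
      exact (Set.finite_Iio N).isOpen_biInter fun m _ =>
        (continuous_apply m).isOpen_preimage _ (isOpen_discrete _)
    exact (hopen.preimage continuous_subtype_val).mem_nhds (fun m _ => rfl)
  filter_upwards [hU] with y hy
  rw [dist_eq_norm]
  have hd : dist' k A y x ≤ (2 : ℝ)⁻¹ ^ N := by
    unfold dist'
    split
    · positivity
    · rename_i hne
      have hS : {m : ℕ | y.1 m ≠ x.1 m}.Nonempty := by
        by_contra hcon
        rw [Set.not_nonempty_iff_eq_empty, Set.eq_empty_iff_forall_notMem] at hcon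
        exact hne (Subtype.ext (funext fun m => not_not.mp (hcon m)))
      have hmem := Nat.sInf_mem hS
      have hNle : N ≤ sInf {m : ℕ | y.1 m ≠ x.1 m} := by
        by_contra hlt
        push_neg at hlt
        exact hmem (hy _ hlt)
      exact pow_le_pow_of_le_one (by norm_num) (by norm_num) hNle
  calc ‖f y - f x‖ ≤ C' * dist' k A y x ^ α := hC2 y x
    _ ≤ C' * ((2 : ℝ)⁻¹ ^ N) ^ α := by
        apply mul_le_mul_of_nonneg_left _ hC'pos.le
        exact Real.rpow_le_rpow (dist'_nonneg k A y x) hd hα.le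
    _ = C' * r ^ N := by
        rw [hrdef, ← Real.rpow_natCast ((2:ℝ)⁻¹) N, ← Real.rpow_natCast ((2:ℝ)⁻¹ ^ α) N,
          ← Real.rpow_mul (by norm_num), ← Real.rpow_mul (by norm_num), mul_comm α (N:ℝ)]
    _ < C' * (ε / C') := by exact mul_lt_mul_of_pos_left hN hC'pos
    _ = ε := mul_div_cancel₀ ε hC'pos.ne'

lemma shift_cons (k : ℕ) (A : Matrix (Fin k) (Fin k) ℕ) (i : Fin k) (x : ShiftSpace k A)
    (hx : A i (x.1 0) = 1) : shift k A (cons k A i x hx) = x := by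
  apply Subtype.ext
  funext m
  rfl

lemma transfer_mul_comp (k : ℕ) (A : Matrix (Fin k) (Fin k) ℕ)
    (ψ h g : ShiftSpace k A → ℝ) (x : ShiftSpace k A) :
    transfer k A ψ (fun y => g (shift k A y) * h y) x = g x * transfer k A ψ h x := by
  unfold transfer
  rw [Finset.mul_sum]
  apply Finset.sum_congr rfl
  intro i _
  split
  · rename_i hAi
    simp only [smul_eq_mul, shift_cons]
    ring
  · simp




theorem stmt6 (k : ℕ) (hk : 1 ≤ k) (A : Matrix (Fin k) (Fin k) ℕ)
    (hA : ZeroOne k A) (hAper : Aperiodic k A)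
    (α : ℝ) (hα : 0 < α) (ψ : ShiftSpace k A → ℝ) (hψ : IsHolder k A α ψ)
    (lam : ℝ) (hlam : 0 < lam) (h : ShiftSpace k A → ℝ)
    (hhpos : ∀ x, 0 < h x) (hhH : IsHolder k A α h)
    (heig : ∀ x, transfer k A ψ h x = lam * h x)
    (ν : Measure (ShiftSpace k A)) (hν : IsProbabilityMeasure ν)
    (hνeig : ∀ g : ShiftSpace k A → ℝ, Continuous g →
      ∫ x, transfer k A ψ g x ∂ν = lam * ∫ x, g x ∂ν)
    (hint : ∫ x, h x ∂ν = 1) :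
    IsProbabilityMeasure (ν.withDensity fun x => ENNReal.ofReal (h x)) ∧
    ∀ B : Set (ShiftSpace k A), MeasurableSet B →
      (ν.withDensity fun x => ENNReal.ofReal (h x)) (shift k A ⁻¹' B) =
        (ν.withDensity fun x => ENNReal.ofReal (h x)) B := by
  classical
  have hσc : Continuous (shift k A) := continuous_shift k A
  have hσm : Measurable (shift k A) := hσc.measurable
  have hcont : Continuous h := continuous_of_isHolder k A hα hhH
  have hm : Measurable h := hcont.measurable
  set μ := ν.withDensity (fun x => ENNReal.ofReal (h x)) with hμdef
  -- the space is nonempty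
  have hNE : Nonempty (ShiftSpace k A) := by
    by_contra hE
    rw [not_nonempty_iff] at hE
    have h1 := hν.measure_univ
    rw [Set.univ_eq_empty_iff.mpr hE, measure_empty] at h1
    exact zero_ne_one h1
  obtain ⟨x0⟩ := hNE
  -- a uniform bound for h
  obtain ⟨C, hC⟩ := hhH
  have hCh : ∀ x, ‖h x‖ ≤ max C 0 + ‖h x0‖ := by
    intro x
    have h1 : ‖h x - h x0‖ ≤ max C 0 * dist' k A x x0 ^ α :=
      (hC x x0).trans (mul_le_mul_of_nonneg_right (le_max_left _ _)
        (Real.rpow_nonneg (dist'_nonneg k A x x0) _))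
    have h2 : dist' k A x x0 ^ α ≤ 1 :=
      Real.rpow_le_one (dist'_nonneg k A x x0) (dist'_le_one k A x x0) hα.le
    have h3 : h x = (h x - h x0) + h x0 := by ring
    calc ‖h x‖ = ‖(h x - h x0) + h x0‖ := by rw [← h3]
      _ ≤ ‖h x - h x0‖ + ‖h x0‖ := norm_add_le _ _
      _ ≤ max C 0 * dist' k A x x0 ^ α + ‖h x0‖ := by linarith
      _ ≤ max C 0 * 1 + ‖h x0‖ := by
          have := mul_le_mul_of_nonneg_left h2 (le_max_right C 0)
          linarith
      _ = max C 0 + ‖h x0‖ := by ring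
  have hChnn : 0 ≤ max C 0 + ‖h x0‖ := le_trans (norm_nonneg _) (hCh x0)
  have hInth : Integrable h ν :=
    ⟨hcont.aestronglyMeasurable, HasFiniteIntegral.of_bounded (ae_of_all _ hCh)⟩
  -- μ is a probability measure
  have hprob : IsProbabilityMeasure μ := by
    constructor
    rw [hμdef, withDensity_apply _ MeasurableSet.univ, setLIntegral_univ,
      ← ofReal_integral_eq_lintegral_ofReal hInth (ae_of_all _ fun x => (hhpos x).le), hint,
      ENNReal.ofReal_one]
  haveI := hprob
  -- integrability of h times a bounded continuous function
  have hIntProd : ∀ (g : ShiftSpace k A → ℝ) (Cg : ℝ), Continuous g → (∀ x, ‖g x‖ ≤ Cg) →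
      Integrable (fun y => h y * g y) ν := by
    intro g Cg hg hbd
    refine ⟨(hcont.mul hg).aestronglyMeasurable,
      HasFiniteIntegral.of_bounded (C := (max C 0 + ‖h x0‖) * Cg) (ae_of_all _ fun y => ?_)⟩
    rw [norm_mul]
    exact mul_le_mul (hCh y) (hbd y) (norm_nonneg _) hChnn
  -- the key invariance identity for continuous functions
  have key : ∀ g : ShiftSpace k A → ℝ, Continuous g →
      ∫ x, h x * g (shift k A x) ∂ν = ∫ x, h x * g x ∂ν := by
    intro g hg
    have h1 := hνeig (fun y => g (shift k A y) * h y) ((hg.comp hσc).mul hcont)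
    have h2 : (fun x => transfer k A ψ (fun y => g (shift k A y) * h y) x)
        = fun x => lam * (g x * h x) :=
      funext fun x => by rw [transfer_mul_comp, heig]; ring
    rw [h2, integral_const_mul] at h1
    have h3 := mul_left_cancel₀ (ne_of_gt hlam) h1
    simp_rw [mul_comm (h _) _]
    exact h3.symm
  -- μ is shift-invariant
  have hdm : Measurable (fun x => ENNReal.ofReal (h x)) := hm.ennreal_ofReal
  have hmap : μ.map (shift k A) = μ := by
    apply ext_of_forall_lintegral_eq_of_IsFiniteMeasure
    intro f
    set g : ShiftSpace k A → ℝ := fun x => (f x : ℝ) with hgdef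
    have hgc : Continuous g := NNReal.continuous_coe.comp f.continuous
    have hgnn : ∀ x, 0 ≤ g x := fun x => (f x).2
    obtain ⟨Cf, hCf⟩ := f.bounded
    have hgbd : ∀ x, ‖g x‖ ≤ g x0 + Cf := by
      intro x
      rw [Real.norm_eq_abs, abs_of_nonneg (hgnn x)]
      have hd := hCf x x0
      rw [NNReal.dist_eq] at hd
      have := le_abs_self (g x - g x0)
      have hcoe : |(f x : ℝ) - (f x0 : ℝ)| = |g x - g x0| := rfl
      rw [hcoe] at hd
      linarith
    have hfm : Measurable fun x : ShiftSpace k A => (f x : ENNReal) :=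
      measurable_coe_nnreal_ennreal.comp f.continuous.measurable
    have hfσm : Measurable fun x : ShiftSpace k A => (f (shift k A x) : ENNReal) :=
      hfm.comp hσm
    have main : ∀ (q : ShiftSpace k A → ℝ), Continuous q → (∀ x, 0 ≤ q x) →
        (∀ x, ‖q x‖ ≤ g x0 + Cf) →
        ∫⁻ y, ENNReal.ofReal (h y) * ENNReal.ofReal (q y) ∂ν
          = ENNReal.ofReal (∫ y, h y * q y ∂ν) := by
      intro q hqc hq0 hqb
      have heqp : ∀ y, ENNReal.ofReal (h y) * ENNReal.ofReal (q y)
          = ENNReal.ofReal (h y * q y) := fun y => (ENNReal.ofReal_mul (hhpos y).le).symm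
      simp_rw [heqp]
      exact (ofReal_integral_eq_lintegral_ofReal (hIntProd q _ hqc hqb)
        (ae_of_all _ fun y => mul_nonneg (hhpos y).le (hq0 y))).symm
    calc ∫⁻ x, (f x : ENNReal) ∂(μ.map (shift k A))
        = ∫⁻ x, (f (shift k A x) : ENNReal) ∂μ := lintegral_map hfm hσm
      _ = ∫⁻ x, ENNReal.ofReal (h x) * (f (shift k A x) : ENNReal) ∂ν := by
          rw [hμdef, lintegral_withDensity_eq_lintegral_mul ν hdm hfσm]
          rfl
      _ = ∫⁻ x, ENNReal.ofReal (h x) * ENNReal.ofReal (g (shift k A x)) ∂ν := by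
          simp_rw [hgdef, ENNReal.ofReal_coe_nnreal]
      _ = ENNReal.ofReal (∫ x, h x * g (shift k A x) ∂ν) :=
          main (fun x => g (shift k A x)) (hgc.comp hσc) (fun x => hgnn _) (fun x => hgbd _)
      _ = ENNReal.ofReal (∫ x, h x * g x ∂ν) := by rw [key g hgc]
      _ = ∫⁻ x, ENNReal.ofReal (h x) * ENNReal.ofReal (g x) ∂ν :=
          (main g hgc hgnn hgbd).symm
      _ = ∫⁻ x, ENNReal.ofReal (h x) * (f x : ENNReal) ∂ν := by
          simp_rw [hgdef, ENNReal.ofReal_coe_nnreal]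
      _ = ∫⁻ x, (f x : ENNReal) ∂μ := by
          rw [hμdef, lintegral_withDensity_eq_lintegral_mul ν hdm hfm]
          rfl
  refine ⟨hprob, fun B hB => ?_⟩
  rw [← Measure.map_apply hσm hB, hmap]


end SpectralGibbs
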